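/- arXiv:2006.11726 — 10 statements merged into one kernel-verified Lean document; each statement's English description precedes it below -/
import Mathlib

section
/- Let 0 < a ≤ b, let ε ∈ (0,1), let L ≥ 0, and let g : ℝ → ℝ be differentiable with L-Lipschitz derivative. Define the sequence z_0 = a, z_{i+1} = z_i + √(ε·z_i), and let M = {b} ∪ {z_i : i ∈ ℕ, a ≤ z_i ≤ b} (a finite set). Then sup_{y ∈ [a,b]} g(y)/y ≤ max_{y ∈ M} g(y)/y + ε·L. -/
open Set
set_option maxHeartbeats 1000000

/-- one-coordinate ratio maximization over the grid M. -/
theorem stmt_0 (a b ε L : ℝ) (g : ℝ → ℝ)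
    (ha : 0 < a) (hab : a ≤ b) (hε : ε ∈ Set.Ioo (0 : ℝ) 1) (hL : 0 ≤ L)
    (hg : Differentiable ℝ g)
    (hlip : ∀ y y' : ℝ, |deriv g y - deriv g y'| ≤ L * |y - y'|)
    (z : ℕ → ℝ) (hz0 : z 0 = a)
    (hzs : ∀ i : ℕ, z (i + 1) = z i + Real.sqrt (ε * z i))
    (M : Set ℝ) (hM : M = {b} ∪ {y : ℝ | (∃ i : ℕ, z i = y) ∧ a ≤ y ∧ y ≤ b}) :
    sSup ((fun y => g y / y) '' Set.Icc a b) ≤ sSup ((fun y => g y / y) '' M) + ε * L := by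
  obtain ⟨hε0, hε1⟩ := hε
  set h : ℝ → ℝ := fun y => g y / y with hh
  have hcont : ContinuousOn h (Set.Icc a b) :=
    hg.continuous.continuousOn.div continuousOn_id
      (fun y hy => ne_of_gt (lt_of_lt_of_le ha hy.1))
  obtain ⟨y0, hy0mem, hy0max⟩ :=
    isCompact_Icc.exists_isMaxOn ⟨a, le_refl a, hab⟩ hcont
  have hMsub : M ⊆ Set.Icc a b := by
    rw [hM]; rintro x (hx | hx)
    · rcases hx with rfl; exact ⟨hab, le_rfl⟩
    · exact ⟨hx.2.1, hx.2.2⟩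
  have hbM : b ∈ M := by rw [hM]; exact Or.inl rfl
  have hMbdd : BddAbove (h '' M) :=
    ((isCompact_Icc.image_of_continuousOn hcont).bddAbove).mono (Set.image_mono hMsub)
  have key : ∀ m ∈ M, h m ≤ sSup (h '' M) := fun m hm => le_csSup hMbdd ⟨m, hm, rfl⟩
  have hy0a : a ≤ y0 := hy0mem.1
  have hy0b : y0 ≤ b := hy0mem.2
  have hy0pos : 0 < y0 := lt_of_lt_of_le ha hy0a
  have hsup : sSup (h '' Set.Icc a b) ≤ h y0 := by
    apply csSup_le (Set.Nonempty.image h ⟨a, Set.mem_Icc.2 ⟨le_rfl, hab⟩⟩)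
    rintro _ ⟨x, hx, rfl⟩; exact hy0max hx
  refine hsup.trans ?_
  -- main claim: h y0 ≤ sSup (h '' M) + ε * L
  have hεL : 0 ≤ ε * L := mul_nonneg hε0.le hL
  rcases eq_or_lt_of_le hy0b with rfl | hy0lt
  · linarith [key _ hbM]
  -- derivative sign at interior max
  have hdiv : HasDerivAt h ((deriv g y0 * y0 - g y0 * 1) / y0 ^ 2) y0 :=
    ((hg y0).hasDerivAt).div (hasDerivAt_id y0) (ne_of_gt hy0pos)
  have hcone : b - y0 ∈ posTangentConeAt (Set.Icc a b) y0 :=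
    sub_mem_posTangentConeAt_of_segment_subset
      ((convex_Icc a b).segment_subset hy0mem ⟨hab, le_rfl⟩)
  have hlocmax : IsLocalMaxOn h (Set.Icc a b) y0 := hy0max.localize
  have hnonpos :
      ((ContinuousLinearMap.smulRight (1 : ℝ →L[ℝ] ℝ)
        ((deriv g y0 * y0 - g y0 * 1) / y0 ^ 2)) (b - y0)) ≤ 0 :=
    hlocmax.hasFDerivWithinAt_nonpos hdiv.hasFDerivAt.hasFDerivWithinAt hcone
  have hd0 : (deriv g y0 * y0 - g y0) / y0 ^ 2 ≤ 0 := by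
    simp only [ContinuousLinearMap.smulRight_apply, ContinuousLinearMap.one_apply,
      smul_eq_mul, mul_one] at hnonpos
    nlinarith [hnonpos, sub_pos.2 hy0lt]
  have hc_le : deriv g y0 * y0 ≤ g y0 := by
    have h2 := mul_nonpos_of_nonpos_of_nonneg hd0 (sq_nonneg y0)
    rw [div_mul_cancel₀ _ (by positivity : y0 ^ 2 ≠ 0)] at h2
    linarith
  -- grid facts
  have hzge : ∀ i, a ≤ z i := by
    intro i; induction i with
    | zero => rw [hz0]
    | succ n ih =>
      rw [hzs n]
      have : 0 ≤ Real.sqrt (ε * z n) := Real.sqrt_nonneg _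
      linarith
  have hsqa : 0 < Real.sqrt (ε * a) := Real.sqrt_pos.2 (mul_pos hε0 ha)
  have hgrow : ∀ i : ℕ, a + i * Real.sqrt (ε * a) ≤ z i := by
    intro i; induction i with
    | zero => simp [hz0]
    | succ n ih =>
      rw [hzs n]
      have h1 : Real.sqrt (ε * a) ≤ Real.sqrt (ε * z n) :=
        Real.sqrt_le_sqrt (by nlinarith [hzge n])
      push_cast
      nlinarith
  have hex : ∃ n : ℕ, y0 < z n := by
    obtain ⟨n, hn⟩ := exists_nat_gt ((b - a) / Real.sqrt (ε * a))
    refine ⟨n, ?_⟩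
    have := hgrow n
    have h2 : b - a < n * Real.sqrt (ε * a) := by
      rw [div_lt_iff₀ hsqa] at hn; linarith
    linarith
  have hky : y0 < z (Nat.find hex) := Nat.find_spec hex
  have hkne : Nat.find hex ≠ 0 := by
    intro h0
    rw [h0, hz0] at hky; linarith
  obtain ⟨j, hj⟩ := Nat.exists_eq_succ_of_ne_zero hkne
  rw [hj] at hky
  have hjlt : ¬ y0 < z j := Nat.find_min hex (by rw [hj]; exact Nat.lt_succ_self j)
  set m := z j with hmdef
  have hm_le : m ≤ y0 := not_lt.1 hjlt
  have hma : a ≤ m := hzge j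
  have hmpos : 0 < m := lt_of_lt_of_le ha hma
  have hmb : m ≤ b := le_trans hm_le hy0b
  have hmM : m ∈ M := by
    rw [hM]; exact Or.inr ⟨⟨j, rfl⟩, hma, hmb⟩
  have hstep : y0 < m + Real.sqrt (ε * m) := by
    rw [Nat.succ_eq_add_one, hzs j] at hky
    exact hky
  have hsq : (y0 - m) ^ 2 ≤ ε * m := by
    have h1 : y0 - m < Real.sqrt (ε * m) := by linarith
    have h2 : 0 ≤ y0 - m := by linarith
    calc (y0 - m) ^ 2 ≤ Real.sqrt (ε * m) ^ 2 := by nlinarith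
      _ = ε * m := Real.sq_sqrt (by positivity)
  -- Taylor estimate
  set c := deriv g y0 with hc
  have taylor : |(g y0 - c * y0) - (g m - c * m)| ≤ (L * (y0 - m)) * (y0 - m) := by
    have := norm_image_sub_le_of_norm_deriv_le_segment'
      (f := fun t => g t - c * t) (f' := fun x => deriv g x - c) (a := m) (b := y0)
      (fun x _ => by
        exact ((((hg x).hasDerivAt).sub
          ((hasDerivAt_id' x).const_mul c)).congr_deriv (by ring)).hasDerivWithinAt (s := Set.Icc m y0))
      (fun x hx => by
        have h1 := hlip x y0
        have h2 : |x - y0| ≤ y0 - m := by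
          rw [abs_le]; constructor <;> [linarith [hx.1]; linarith [hx.2.le]]
        calc ‖deriv g x - c‖ = |deriv g x - deriv g y0| := rfl
          _ ≤ L * |x - y0| := h1
          _ ≤ L * (y0 - m) := by nlinarith [abs_nonneg (x - y0)])
      y0 (right_mem_Icc.2 hm_le)
    simpa [Real.norm_eq_abs] using this
  rw [abs_le] at taylor
  have hgm : g y0 - c * (y0 - m) - L * (y0 - m) ^ 2 ≤ g m := by nlinarith [taylor.1, taylor.2]
  -- combine
  have hfinal : h y0 ≤ h m + ε * L := by
    have hc_le' : c * (y0 - m) ≤ (g y0 / y0) * (y0 - m) := by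
      have : c ≤ g y0 / y0 := (le_div_iff₀ hy0pos).2 hc_le
      nlinarith [sub_nonneg.2 hm_le]
    have h1 : (g y0 / y0) * m - ε * L * m ≤ g m := by
      have h2 : L * (y0 - m) ^ 2 ≤ L * (ε * m) := by nlinarith
      have h3 : g y0 - (g y0 / y0) * (y0 - m) = (g y0 / y0) * m := by
        field_simp; ring
      nlinarith
    show g y0 / y0 ≤ g m / m + ε * L
    rw [← sub_le_iff_le_add, le_div_iff₀ hmpos]
    have h4 : (g y0 / y0 - ε * L) * m = (g y0 / y0) * m - ε * L * m := by ring
    linarith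
  linarith [key _ hmM]
end

section
/- Let L ≥ 0 and let g : ℝ → ℝ be differentiable with L-Lipschitz derivative. Suppose 0 < y_M ≤ y* and g'(y*)·y* = g(y*). Then g(y*)/y* ≤ g(y_M)/y_M + (y* − y_M)²·L/(2·y_M). -/
/-- ratio bound at a first-order stationary point of y ↦ g(y)/y. -/
theorem stmt_1 (L : ℝ) (hL : 0 ≤ L) (g : ℝ → ℝ)
    (hg : Differentiable ℝ g)
    (hlip : ∀ y y' : ℝ, |deriv g y - deriv g y'| ≤ L * |y - y'|)
    (yM ystar : ℝ) (hyM : 0 < yM) (hle : yM ≤ ystar)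
    (hopt : deriv g ystar * ystar = g ystar) :
    g ystar / ystar ≤ g yM / yM + (ystar - yM) ^ 2 * L / (2 * yM) := by
  have hy : (0:ℝ) < ystar := lt_of_lt_of_le hyM hle
  set h : ℝ → ℝ := fun t => g t - deriv g ystar * t + L/2 * (ystar - t)^2 with hh
  have hderiv : ∀ t, HasDerivAt h (deriv g t - deriv g ystar - L*(ystar - t)) t := by
    intro t
    have h1 := (hg t).hasDerivAt
    have h2 : HasDerivAt (fun t : ℝ => deriv g ystar * t) (deriv g ystar) t := by
      simpa using (hasDerivAt_id t).const_mul (deriv g ystar)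
    have h3 : HasDerivAt (fun t : ℝ => ystar - t) (-1) t := by
      simpa using (hasDerivAt_id t).const_sub ystar
    have h4 : HasDerivAt (fun t : ℝ => L/2 * (ystar - t)^2)
        (L/2 * (2 * (ystar - t)^1 * (-1))) t := (h3.pow 2).const_mul (L/2)
    exact ((h1.sub h2).add h4).congr_deriv (by ring)
  have hdiff : Differentiable ℝ h := fun t => (hderiv t).differentiableAt
  have hanti : AntitoneOn h (Set.Icc yM ystar) := by
    apply antitoneOn_of_deriv_nonpos (convex_Icc _ _) hdiff.continuous.continuousOn
      hdiff.differentiableOn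
    intro t ht
    rw [interior_Icc] at ht
    rw [(hderiv t).deriv]
    have hb : deriv g t - deriv g ystar ≤ L * (ystar - t) := by
      have := (abs_le.mp (hlip t ystar)).2
      rwa [abs_of_nonpos (by linarith [ht.2] : t - ystar ≤ 0), neg_sub] at this
    linarith
  have key : h ystar ≤ h yM :=
    hanti (Set.mem_Icc.mpr ⟨le_refl _, hle⟩) (Set.mem_Icc.mpr ⟨hle, le_refl _⟩) hle
  have hstar : h ystar = 0 := by simp [hh, hopt]
  have key' : deriv g ystar * yM ≤ g yM + L/2*(ystar - yM)^2 := by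
    have : (0:ℝ) ≤ g yM - deriv g ystar * yM + L/2 * (ystar - yM)^2 := by
      rw [← hstar]; exact key
    linarith
  have hratio : g ystar / ystar = deriv g ystar := by
    rw [div_eq_iff hy.ne', ← hopt]
  rw [hratio]
  have step : deriv g ystar ≤ (g yM + L/2*(ystar - yM)^2)/yM := by
    rw [le_div_iff₀ hyM]; linarith
  refine step.trans (le_of_eq ?_)
  field_simp
end

section
/- Let L ≥ 0, ε > 0, and let g : ℝ → ℝ be differentiable with L-Lipschitz derivative. Suppose 0 < y_M ≤ y* ≤ y_M + √(ε·y_M) and g'(y*)·y* = g(y*). Then g(y*)/y* ≤ g(y_M)/y_M + ε·L. -/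
/-- ratio bound at a stationary point when y* is close to the grid point y_M. -/
theorem stmt_2 (L ε : ℝ) (hL : 0 ≤ L) (hε : 0 < ε) (g : ℝ → ℝ)
    (hg : Differentiable ℝ g)
    (hlip : ∀ y y' : ℝ, |deriv g y - deriv g y'| ≤ L * |y - y'|)
    (yM ystar : ℝ) (hyM : 0 < yM) (hle : yM ≤ ystar)
    (hclose : ystar ≤ yM + Real.sqrt (ε * yM))
    (hopt : deriv g ystar * ystar = g ystar) :
    g ystar / ystar ≤ g yM / yM + ε * L := by
  have hys : 0 < ystar := lt_of_lt_of_le hyM hle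
  have hεyM : (0:ℝ) ≤ ε * yM := by positivity
  have hsq : (ystar - yM)^2 ≤ ε * yM := by
    have h1 : ystar - yM ≤ Real.sqrt (ε * yM) := by linarith
    have h2 : (0:ℝ) ≤ ystar - yM := by linarith
    calc (ystar - yM)^2 ≤ (Real.sqrt (ε * yM))^2 := by
          apply pow_le_pow_left₀ h2 h1
      _ = ε * yM := Real.sq_sqrt hεyM
  rcases eq_or_lt_of_le hle with heq | hlt
  · subst heq
    have : 0 ≤ ε * L := by positivity
    linarith
  · obtain ⟨c, hc, hderiv⟩ := exists_hasDerivAt_eq_slope g (deriv g) hlt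
      (hg.continuous.continuousOn) (fun x _ => (hg x).hasDerivAt)
    have hne : ystar - yM ≠ 0 := by linarith [hc.1, hc.2]
    have heq : g ystar - g yM = deriv g c * (ystar - yM) := by
      field_simp at hderiv
      linarith [hderiv]
    have habs := hlip c ystar
    have hcabs : |c - ystar| ≤ ystar - yM := by
      rw [abs_le]; constructor <;> [linarith [hc.1]; linarith [hc.2]]
    have hdc : deriv g c - deriv g ystar ≤ L * (ystar - yM) := by
      have := abs_le.mp habs
      have h2 : L * |c - ystar| ≤ L * (ystar - yM) := mul_le_mul_of_nonneg_left hcabs hL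
      linarith [this.1, this.2]
    have key : g ystar * yM ≤ (g yM + ε * L * yM) * ystar := by
      nlinarith [mul_le_mul_of_nonneg_left hdc (mul_nonneg (by linarith [hc.1, hc.2] : (0:ℝ) ≤ ystar - yM) hys.le),
        mul_le_mul_of_nonneg_left hsq (mul_nonneg hL hys.le), hopt, heq]
    have : g ystar / ystar ≤ (g yM + ε * L * yM) / yM := by
      rw [div_le_div_iff₀ hys hyM]; linarith
    calc g ystar / ystar ≤ (g yM + ε * L * yM) / yM := this
      _ = g yM / yM + ε * L := by field_simp
end

section
/- Let D > 0, W ≥ 0, c ≥ 0, and ℓ ∈ ℕ. Let V_0, V_1, …, V_ℓ and d_1, …, d_ℓ be real numbers with V_0 ≥ 0, 0 ≤ d_h ≤ D for every 1 ≤ h ≤ ℓ, and V_h ≥ (1 − d_h/D)·V_{h−1} + (d_h/D)·W − c·d_h for every 1 ≤ h ≤ ℓ. Then V_ℓ ≥ (1 − exp(−(Σ_{h=1}^ℓ d_h)/D))·W − c·(Σ_{h=1}^ℓ d_h). -/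
lemma stmt_3_aux (D W c : ℝ) (hD : 0 < D) (hc : 0 ≤ c) :
    ∀ ℓ : ℕ, ∀ V d : ℕ → ℝ, 0 ≤ V 0 →
    (∀ h : ℕ, 1 ≤ h → h ≤ ℓ → 0 ≤ d h ∧ d h ≤ D) →
    (∀ h : ℕ, 1 ≤ h → h ≤ ℓ →
      V h ≥ (1 - d h / D) * V (h - 1) + (d h / D) * W - c * d h) →
    V ℓ ≥ (1 - ∏ h ∈ Finset.Icc 1 ℓ, (1 - d h / D)) * W
      - c * ∑ h ∈ Finset.Icc 1 ℓ, d h := by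
  intro ℓ
  induction ℓ with
  | zero =>
    intro V d hV0 hd hrec
    simp [hV0]
  | succ n ih =>
    intro V d hV0 hd hrec
    have hdn : 0 ≤ d (n+1) ∧ d (n+1) ≤ D := hd (n+1) (by omega) le_rfl
    have hIH := ih V d hV0 (fun h h1 h2 => hd h h1 (by omega))
      (fun h h1 h2 => hrec h h1 (by omega))
    have hfac0 : 0 ≤ 1 - d (n+1) / D := by
      have := (div_le_one hD).mpr hdn.2
      linarith
    have hfac1 : 1 - d (n+1) / D ≤ 1 := by
      have : 0 ≤ d (n+1) / D := div_nonneg hdn.1 hD.le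
      linarith
    have hS : 0 ≤ ∑ h ∈ Finset.Icc 1 n, d h :=
      Finset.sum_nonneg fun h hh => by
        rw [Finset.mem_Icc] at hh
        exact (hd h hh.1 (by omega)).1
    have hrn := hrec (n+1) (by omega) le_rfl
    simp only [Nat.add_sub_cancel] at hrn
    rw [Finset.prod_Icc_succ_top (by omega : 1 ≤ n + 1),
        Finset.sum_Icc_succ_top (by omega : 1 ≤ n + 1)]
    have hstep : (1 - d (n+1) / D) * V n ≥
        (1 - d (n+1) / D) * ((1 - ∏ h ∈ Finset.Icc 1 n, (1 - d h / D)) * W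
          - c * ∑ h ∈ Finset.Icc 1 n, d h) :=
      mul_le_mul_of_nonneg_left hIH hfac0
    have hcS : (1 - d (n+1) / D) * (c * ∑ h ∈ Finset.Icc 1 n, d h) ≤
        c * ∑ h ∈ Finset.Icc 1 n, d h := by
      nlinarith [mul_nonneg hc hS]
    nlinarith [hrn, hstep, hcS]

/-- the abstract induction behind the coordinate ascent guarantee. -/
theorem stmt_3 (D W c : ℝ) (hD : 0 < D) (hW : 0 ≤ W) (hc : 0 ≤ c) (ℓ : ℕ)
    (V d : ℕ → ℝ) (hV0 : 0 ≤ V 0)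
    (hd : ∀ h : ℕ, 1 ≤ h → h ≤ ℓ → 0 ≤ d h ∧ d h ≤ D)
    (hrec : ∀ h : ℕ, 1 ≤ h → h ≤ ℓ →
      V h ≥ (1 - d h / D) * V (h - 1) + (d h / D) * W - c * d h) :
    V ℓ ≥ (1 - Real.exp (-(∑ h ∈ Finset.Icc 1 ℓ, d h) / D)) * W
      - c * ∑ h ∈ Finset.Icc 1 ℓ, d h := by
  have haux := stmt_3_aux D W c hD hc ℓ V d hV0 hd hrec
  have hprod : ∏ h ∈ Finset.Icc 1 ℓ, (1 - d h / D) ≤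
      Real.exp (-(∑ h ∈ Finset.Icc 1 ℓ, d h) / D) := by
    have h1 : ∏ h ∈ Finset.Icc 1 ℓ, (1 - d h / D) ≤
        ∏ h ∈ Finset.Icc 1 ℓ, Real.exp (-(d h / D)) := by
      apply Finset.prod_le_prod
      · intro h hh
        rw [Finset.mem_Icc] at hh
        have := (div_le_one hD).mpr (hd h hh.1 hh.2).2
        linarith
      · intro h hh
        have := Real.add_one_le_exp (-(d h / D))
        linarith
    rw [← Real.exp_sum] at h1
    have heq : (∑ x ∈ Finset.Icc 1 ℓ, -(d x / D)) = -(∑ h ∈ Finset.Icc 1 ℓ, d h) / D := by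
      rw [neg_div, Finset.sum_div]
      simp
    rwa [heq] at h1
  have := mul_le_mul_of_nonneg_right hprod hW
  linarith
end

section
/- Fix n ∈ ℕ and u ∈ ℝⁿ with u ≥ 0, and let F : [0,u] → ℝ be submodular. Let x ∈ [0,u] and o ∈ ℝⁿ with o ≥ 0 componentwise and x + o ∈ [0,u]. Then F(x + o) − F(x) ≤ Σ_{i=1}^n (F(x + o_i·e_i) − F(x)). -/
/-- subadditivity of marginals for a submodular function on a box. -/
theorem stmt_4 (n : ℕ) (u : Fin n → ℝ) (hu : 0 ≤ u) (F : (Fin n → ℝ) → ℝ)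
    (hsub : ∀ x y : Fin n → ℝ, 0 ≤ x → x ≤ u → 0 ≤ y → y ≤ u →
      F (x ⊔ y) + F (x ⊓ y) ≤ F x + F y)
    (x o : Fin n → ℝ) (hx0 : 0 ≤ x) (hxu : x ≤ u) (ho : 0 ≤ o)
    (hxo : x + o ≤ u) :
    F (x + o) - F x ≤ ∑ i : Fin n, (F (x + Pi.single i (o i)) - F x) := by
  have ho' : ∀ k, (0 : ℝ) ≤ o k := fun k => ho k
  have key : ∀ s : Finset (Fin n),
      F (x + ∑ i ∈ s, Pi.single i (o i)) - F x
        ≤ ∑ i ∈ s, (F (x + Pi.single i (o i)) - F x) := by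
    intro s
    induction s using Finset.induction_on with
    | empty => simp
    | @insert j s hj ih =>
      set S : Fin n → ℝ := ∑ i ∈ s, Pi.single i (o i) with hSdef
      have hSapp : ∀ k, S k = if k ∈ s then o k else 0 := by
        intro k
        rw [hSdef, Finset.sum_apply]
        exact Finset.sum_pi_single (f := fun i => o i) k s
      have hS0' : ∀ k, (0 : ℝ) ≤ S k := by
        intro k; rw [hSapp]; split
        · exact ho' k
        · exact le_refl 0
      have hSo' : ∀ k, S k ≤ o k := by
        intro k; rw [hSapp]; split
        · exact le_refl _
        · exact ho' k
      have hSj : S j = 0 := by rw [hSapp, if_neg hj]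
      have hsingle0' : ∀ k, (0 : ℝ) ≤ (Pi.single j (o j) : Fin n → ℝ) k := by
        intro k
        rcases eq_or_ne k j with rfl | hk
        · rw [Pi.single_eq_same]; exact ho' k
        · rw [Pi.single_eq_of_ne hk]
      have hsingleo' : ∀ k, (Pi.single j (o j) : Fin n → ℝ) k ≤ o k := by
        intro k
        rcases eq_or_ne k j with rfl | hk
        · rw [Pi.single_eq_same]
        · rw [Pi.single_eq_of_ne hk]; exact ho' k
      have hb1 : (0 : Fin n → ℝ) ≤ x + S := fun k => by
        have := hx0 k; have := hS0' k
        simp only [Pi.add_apply, Pi.zero_apply] at *; linarith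
      have hb2 : x + S ≤ u := fun k => by
        have := hxo k; have := hSo' k
        simp only [Pi.add_apply] at *; linarith
      have hb3 : (0 : Fin n → ℝ) ≤ x + Pi.single j (o j) := fun k => by
        have := hx0 k; have := hsingle0' k
        simp only [Pi.add_apply, Pi.zero_apply] at *; linarith
      have hb4 : x + Pi.single j (o j) ≤ u := fun k => by
        have := hxo k; have := hsingleo' k
        simp only [Pi.add_apply] at *; linarith
      have hsup : (x + S) ⊔ (x + Pi.single j (o j)) = x + (Pi.single j (o j) + S) := by
        funext k
        simp only [Pi.sup_apply, Pi.add_apply]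
        rcases eq_or_ne k j with rfl | hk
        · rw [hSj, Pi.single_eq_same, max_eq_right (by linarith [ho' k])]
          ring
        · rw [Pi.single_eq_of_ne hk, max_eq_left (by linarith [hS0' k])]
          ring
      have hinf : (x + S) ⊓ (x + Pi.single j (o j)) = x := by
        funext k
        simp only [Pi.inf_apply, Pi.add_apply]
        rcases eq_or_ne k j with rfl | hk
        · rw [hSj, Pi.single_eq_same, min_eq_left (by linarith [ho' k])]
          ring
        · rw [Pi.single_eq_of_ne hk, min_eq_right (by linarith [hS0' k])]
          ring
      have h := hsub (x + S) (x + Pi.single j (o j)) hb1 hb2 hb3 hb4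
      rw [hsup, hinf] at h
      rw [Finset.sum_insert hj, Finset.sum_insert hj, ← hSdef]
      linarith
  have huniv := key Finset.univ
  rwa [Finset.univ_sum_single] at huniv
end

section
/- Fix n ∈ ℕ and u ∈ ℝⁿ with u ≥ 0, and let F : [0,u] → ℝ be monotone and submodular. Let x, y ∈ [0,u] and o ∈ ℝⁿ with o ≥ 0 componentwise, Σ_{i=1}^n o_i > 0, x + o ∈ [0,u], and y ≤ x + o componentwise. Then there exists a coordinate i with o_i > 0 such that (F(x + o_i·e_i) − F(x))/o_i ≥ (F(y) − F(x))/(Σ_{j=1}^n o_j). -/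
/-- the best coordinate-wise marginal density matches the average
density needed to reach the benchmark y. -/
theorem stmt_5 (n : ℕ) (u : Fin n → ℝ) (hu : 0 ≤ u) (F : (Fin n → ℝ) → ℝ)
    (hmono : ∀ x y : Fin n → ℝ, 0 ≤ x → x ≤ u → 0 ≤ y → y ≤ u → x ≤ y → F x ≤ F y)
    (hsub : ∀ x y : Fin n → ℝ, 0 ≤ x → x ≤ u → 0 ≤ y → y ≤ u →
      F (x ⊔ y) + F (x ⊓ y) ≤ F x + F y)
    (x y o : Fin n → ℝ) (hx0 : 0 ≤ x) (hxu : x ≤ u) (hy0 : 0 ≤ y) (hyu : y ≤ u)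
    (ho : 0 ≤ o) (hosum : 0 < ∑ i : Fin n, o i)
    (hxo : x + o ≤ u) (hyxo : y ≤ x + o) :
    ∃ i : Fin n, 0 < o i ∧
      (F y - F x) / (∑ j : Fin n, o j) ≤ (F (x + Pi.single i (o i)) - F x) / o i := by
  set S := ∑ j : Fin n, o j with hSdef
  set g : Fin n → ℝ := fun i => F (x + Pi.single i (o i)) - F x with hgdef
  have hraw : ∀ (s : Finset (Fin n)) (j : Fin n),
      (∑ i ∈ s, Pi.single i (o i)) j = if j ∈ s then o j else 0 := by
    intro s j
    simp [Finset.sum_apply, Finset.sum_pi_single]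
  have hz0 : ∀ s : Finset (Fin n), 0 ≤ x + ∑ i ∈ s, Pi.single i (o i) := by
    intro s j
    simp only [Pi.add_apply, Pi.zero_apply, hraw]
    have h1 := hx0 j; have h2 := ho j
    simp only [Pi.zero_apply] at h1 h2
    split <;> linarith
  have hzu : ∀ s : Finset (Fin n), (x + ∑ i ∈ s, Pi.single i (o i)) ≤ u := by
    intro s j
    simp only [Pi.add_apply, hraw]
    have h1 := hxo j; have h2 := hxu j
    simp only [Pi.add_apply] at h1
    split <;> linarith
  have key : ∀ s : Finset (Fin n),
      F (x + ∑ i ∈ s, Pi.single i (o i)) - F x ≤ ∑ i ∈ s, g i := by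
    intro s
    induction s using Finset.induction with
    | empty => simp
    | @insert a s ha ih =>
      have hsup : (x + ∑ i ∈ s, Pi.single i (o i)) ⊔ (x + Pi.single a (o a))
          = x + ∑ i ∈ insert a s, Pi.single i (o i) := by
        funext j
        simp only [Pi.sup_apply, Pi.add_apply, hraw, Pi.single_apply]
        have h2 := ho j
        simp only [Pi.zero_apply] at h2
        by_cases h1 : j = a
        · subst h1
          rw [if_pos rfl, if_neg ha, if_pos (Finset.mem_insert_self j s), add_zero,
            max_eq_right (by linarith)]
        · by_cases hjs : j ∈ s <;>
            simp [h1, hjs, Finset.mem_insert] <;> linarith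
      have hinf : (x + ∑ i ∈ s, Pi.single i (o i)) ⊓ (x + Pi.single a (o a)) = x := by
        funext j
        simp only [Pi.inf_apply, Pi.add_apply, hraw, Pi.single_apply]
        have h2 := ho j
        simp only [Pi.zero_apply] at h2
        by_cases h1 : j = a
        · subst h1
          rw [if_pos rfl, if_neg ha, add_zero, min_eq_left (by linarith)]
        · by_cases hjs : j ∈ s <;> simp [h1, hjs] <;> linarith
      have hq0 : 0 ≤ x + Pi.single a (o a) := by
        have h := hz0 {a}; simpa using h
      have hqu : x + Pi.single a (o a) ≤ u := by
        have h := hzu {a}; simpa using h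
      have hs' := hsub (x + ∑ i ∈ s, Pi.single i (o i)) (x + Pi.single a (o a))
        (hz0 s) (hzu s) hq0 hqu
      rw [hsup, hinf] at hs'
      have hgsum : ∑ i ∈ insert a s, g i = g a + ∑ i ∈ s, g i := Finset.sum_insert ha
      rw [hgsum]
      have hga : g a = F (x + Pi.single a (o a)) - F x := rfl
      linarith
  have htot : F y - F x ≤ ∑ i : Fin n, g i := by
    have hxo0 : 0 ≤ x + o := fun j => by
      have := hx0 j; have := ho j
      simp only [Pi.add_apply, Pi.zero_apply] at *
      linarith
    have hxoy : F y ≤ F (x + o) := hmono y (x + o) hy0 hyu hxo0 hxo hyxo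
    have heq : x + ∑ i : Fin n, Pi.single i (o i) = x + o := by
      congr 1
      exact Finset.univ_sum_single o
    have hk := key Finset.univ
    rw [heq] at hk
    linarith
  by_contra hcon
  push_neg at hcon
  have hex : ∃ i : Fin n, 0 < o i := by
    by_contra h
    push_neg at h
    have : S ≤ 0 := Finset.sum_nonpos (fun i _ => h i)
    linarith
  obtain ⟨i0, hi0⟩ := hex
  have hlt : ∑ i : Fin n, g i < ∑ i : Fin n, (F y - F x) / S * o i := by
    apply Finset.sum_lt_sum
    · intro i _
      rcases lt_or_eq_of_le (ho i) with hoi | hoi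
      · have h1 := hcon i hoi
        have h2 : g i / o i < (F y - F x) / S := by simpa [hgdef] using h1
        have := (div_lt_iff₀ hoi).mp h2
        linarith
      · simp [hgdef, ← hoi]
    · exact ⟨i0, Finset.mem_univ i0, by
        have h1 := hcon i0 hi0
        have h2 : g i0 / o i0 < (F y - F x) / S := by simpa [hgdef] using h1
        have := (div_lt_iff₀ hi0).mp h2
        linarith⟩
  rw [← Finset.mul_sum, ← hSdef, div_mul_cancel₀ _ (ne_of_gt hosum)] at hlt
  linarith
end

section
/- Fix n ∈ ℕ and u ∈ ℝⁿ with u ≥ 0, and let F : [0,u] → ℝ be non-negative, monotone and submodular. Let ε ∈ (0, 1/4), B ≥ 0, L ≥ 0, let OPT ∈ [0,u], let j be a coordinate, and let g ∈ [0,u] satisfy F(g) ≥ (1 − 1/e − 2ε)·F(OPT − OPT_j·e_j) − ε·B·L. Then max(F(g), F(u_j·e_j)) ≥ ((e − 1)/(2e − 1) − 2ε)·F(OPT) − ε·B·L. -/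
/-- the combination step of the Enhanced Coordinate Ascent analysis. -/
theorem stmt_8 (n : ℕ) (u : Fin n → ℝ) (hu : 0 ≤ u) (F : (Fin n → ℝ) → ℝ)
    (hnn : ∀ x : Fin n → ℝ, 0 ≤ x → x ≤ u → 0 ≤ F x)
    (hmono : ∀ x y : Fin n → ℝ, 0 ≤ x → x ≤ u → 0 ≤ y → y ≤ u → x ≤ y → F x ≤ F y)
    (hsub : ∀ x y : Fin n → ℝ, 0 ≤ x → x ≤ u → 0 ≤ y → y ≤ u →
      F (x ⊔ y) + F (x ⊓ y) ≤ F x + F y)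
    (ε B L : ℝ) (hε : ε ∈ Set.Ioo (0 : ℝ) (1 / 4)) (hB : 0 ≤ B) (hL : 0 ≤ L)
    (OPT : Fin n → ℝ) (hOPT0 : 0 ≤ OPT) (hOPTu : OPT ≤ u) (j : Fin n)
    (g : Fin n → ℝ) (hg0 : 0 ≤ g) (hgu : g ≤ u)
    (hgval : F g ≥ (1 - 1 / Real.exp 1 - 2 * ε) * F (OPT - Pi.single j (OPT j)) - ε * B * L) :
    max (F g) (F (Pi.single j (u j))) ≥
      ((Real.exp 1 - 1) / (2 * Real.exp 1 - 1) - 2 * ε) * F OPT - ε * B * L := by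
  obtain ⟨hε0, hε4⟩ := hε
  set E := Real.exp 1 with hEdef
  have hE : 2 < E := by
    have := Real.exp_one_gt_d9; rw [hEdef]; linarith
  set x : Fin n → ℝ := OPT - Pi.single j (OPT j) with hx
  set y : Fin n → ℝ := Pi.single j (u j) with hy
  have hxi : ∀ i, x i = if i = j then 0 else OPT i := by
    intro i
    by_cases h : i = j <;> simp [hx, Pi.single_apply, h]
  have hyi : ∀ i, y i = if i = j then u j else 0 := by
    intro i
    by_cases h : i = j <;> simp [hy, Pi.single_apply, h]
  have hx0 : 0 ≤ x := by
    intro i; rw [hxi i]; split_ifs with h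
    · exact le_rfl
    · exact hOPT0 i
  have hxu : x ≤ u := by
    intro i; rw [hxi i]; split_ifs with h
    · subst h; exact hu i
    · exact hOPTu i
  have hy0 : 0 ≤ y := by
    intro i; rw [hyi i]; split_ifs with h
    · exact hu j
    · exact le_rfl
  have hyu : y ≤ u := by
    intro i; rw [hyi i]; split_ifs with h
    · subst h; exact le_rfl
    · exact hu i
  have hinf : x ⊓ y = 0 := by
    funext i
    simp only [Pi.inf_apply, Pi.zero_apply, hxi i, hyi i]
    split_ifs with h
    · exact inf_eq_left.mpr (hu j)
    · exact inf_eq_right.mpr (hOPT0 i)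
  have hsup0 : 0 ≤ x ⊔ y := le_sup_of_le_left hx0
  have hsupu : x ⊔ y ≤ u := sup_le hxu hyu
  have hOPTsup : OPT ≤ x ⊔ y := by
    intro i
    rw [Pi.sup_apply, hxi i, hyi i]
    split_ifs with h
    · subst h; exact le_sup_of_le_right (hOPTu i)
    · exact le_sup_of_le_left le_rfl
  have hsum : F OPT ≤ F x + F y := by
    have h1 := hsub x y hx0 hxu hy0 hyu
    have h2 := hmono OPT (x ⊔ y) hOPT0 hOPTu hsup0 hsupu hOPTsup
    have h3 : 0 ≤ F (x ⊓ y) := by rw [hinf]; exact hnn 0 le_rfl hu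
    linarith
  -- arithmetic part
  set a := F x with ha
  set c := F y with hc
  set O := F OPT with hO
  set M := max (F g) c with hM
  set t := ε * B * L with htdef
  have ht0 : 0 ≤ t := by positivity
  have ha0 : 0 ≤ a := hnn x hx0 hxu
  have hc0 : 0 ≤ c := hnn y hy0 hyu
  have hO0 : 0 ≤ O := hnn OPT hOPT0 hOPTu
  have hE0 : (0:ℝ) < E := by linarith
  set q := 1 / E with hq
  have hqE : q * E = 1 := by rw [hq]; field_simp
  have hq0 : 0 < q := by positivity
  have hq2 : q < 1 / 2 := by rw [hq, div_lt_div_iff₀ hE0 (by norm_num)]; linarith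
  set r := (E - 1) / (2 * E - 1) with hr
  have hden : (0:ℝ) < 2 * E - 1 := by linarith
  have hr0 : 0 ≤ r := div_nonneg (by linarith) hden.le
  have hrq : r * (2 - q) = 1 - q := by
    rw [hr, hq]; field_simp
    exact mul_div_cancel_right₀ _ (ne_of_gt (by linarith))
  have hM1 : (1 - q - 2 * ε) * a - t ≤ M := le_trans hgval (le_max_left _ _)
  have hM2 : c ≤ M := le_max_right _ _
  have hcoef : (r - 2 * ε) * (2 - q - 2 * ε) ≤ 1 - q - 2 * ε := by
    nlinarith [mul_nonneg hε0.le (by linarith : (0:ℝ) ≤ r + 1 - q - 2 * ε)]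
  have hMO : (2 - q - 2 * ε) * M ≥ (1 - q - 2 * ε) * O - t := by
    have hc1 : (0:ℝ) ≤ 1 - q - 2 * ε := by linarith
    nlinarith [mul_le_mul_of_nonneg_left hM2 hc1, mul_le_mul_of_nonneg_left hsum hc1]
  have hD : (0:ℝ) < 2 - q - 2 * ε := by linarith
  have hcoefO : (r - 2 * ε) * (2 - q - 2 * ε) * O ≤ (1 - q - 2 * ε) * O :=
    mul_le_mul_of_nonneg_right hcoef hO0
  show (r - 2 * ε) * O - t ≤ M
  nlinarith [mul_nonneg ht0 (by linarith : (0:ℝ) ≤ 1 - q - 2 * ε)]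
end

section
/- Fix n ∈ ℕ with n ≥ 3 and u ∈ ℝⁿ with u ≥ 0, and let F : [0,u] → ℝ be non-negative and submodular. Let v ∈ [0,u], let h₁ be a coordinate maximizing F(v_{h₁}·e_{h₁}) over all coordinates, and let h₂ ≠ h₁ be a coordinate maximizing F(v_{h₁}·e_{h₁} + v_{h₂}·e_{h₂}) over all coordinates other than h₁. Then for every coordinate i ∉ {h₁, h₂}: F(v_{h₁}·e_{h₁} + v_{h₂}·e_{h₂} + v_i·e_i) − F(v_{h₁}·e_{h₁} + v_{h₂}·e_{h₂}) ≤ F(v_{h₁}·e_{h₁} + v_{h₂}·e_{h₂})/2. -/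
/-- after the two best coordinates are chosen, no other coordinate
of v contributes more than half of their joint value. -/
theorem stmt_9 (n : ℕ) (hn : 3 ≤ n) (u : Fin n → ℝ) (hu : 0 ≤ u)
    (F : (Fin n → ℝ) → ℝ)
    (hnn : ∀ x : Fin n → ℝ, 0 ≤ x → x ≤ u → 0 ≤ F x)
    (hsub : ∀ x y : Fin n → ℝ, 0 ≤ x → x ≤ u → 0 ≤ y → y ≤ u →
      F (x ⊔ y) + F (x ⊓ y) ≤ F x + F y)
    (v : Fin n → ℝ) (hv0 : 0 ≤ v) (hvu : v ≤ u)
    (h₁ h₂ : Fin n) (hne : h₂ ≠ h₁)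
    (hmax1 : ∀ k : Fin n, F (Pi.single k (v k)) ≤ F (Pi.single h₁ (v h₁)))
    (hmax2 : ∀ k : Fin n, k ≠ h₁ →
      F (Pi.single h₁ (v h₁) + Pi.single k (v k)) ≤
        F (Pi.single h₁ (v h₁) + Pi.single h₂ (v h₂)))
    (i : Fin n) (hi1 : i ≠ h₁) (hi2 : i ≠ h₂) :
    F (Pi.single h₁ (v h₁) + Pi.single h₂ (v h₂) + Pi.single i (v i)) -
        F (Pi.single h₁ (v h₁) + Pi.single h₂ (v h₂)) ≤
      F (Pi.single h₁ (v h₁) + Pi.single h₂ (v h₂)) / 2 := by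
  classical
  have hvh1 : 0 ≤ v h₁ := hv0 h₁
  have hvh2 : 0 ≤ v h₂ := hv0 h₂
  have hvi : 0 ≤ v i := hv0 i
  set a : Fin n → ℝ := Pi.single h₁ (v h₁) with ha
  set b : Fin n → ℝ := Pi.single h₂ (v h₂) with hb
  set c : Fin n → ℝ := Pi.single i (v i) with hc
  have h0a : (0:Fin n → ℝ) ≤ a := by
    intro j; simp only [ha, Pi.single_apply, Pi.zero_apply]
    split_ifs with h
    · subst h; exact hvh1
    · exact le_rfl
  have h0b : (0:Fin n → ℝ) ≤ b := by
    intro j; simp only [hb, Pi.single_apply, Pi.zero_apply]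
    split_ifs with h
    · subst h; exact hvh2
    · exact le_rfl
  have h0c : (0:Fin n → ℝ) ≤ c := by
    intro j; simp only [hc, Pi.single_apply, Pi.zero_apply]
    split_ifs with h
    · subst h; exact hvi
    · exact le_rfl
  have h12 : h₁ ≠ h₂ := hne.symm
  have h1i : h₁ ≠ i := hi1.symm
  have h2i : h₂ ≠ i := hi2.symm
  have hbound : ∀ j : Fin n, a j + b j + c j ≤ u j := by
    intro j
    rcases eq_or_ne j h₁ with rfl | j1
    · simpa [ha, hb, hc, Pi.single_apply, h12, h1i] using hvu j
    rcases eq_or_ne j h₂ with rfl | j2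
    · simpa [ha, hb, hc, Pi.single_apply, hne, h2i] using hvu j
    rcases eq_or_ne j i with rfl | j3
    · simpa [ha, hb, hc, Pi.single_apply, hi1, hi2] using hvu j
    · simpa [ha, hb, hc, Pi.single_apply, j1, j2, j3] using hu j
  have hau : a ≤ u := by
    intro j; have := hbound j
    have := h0b j; have := h0c j; simp only [Pi.zero_apply] at *
    linarith
  have habu : a + b ≤ u := by
    intro j; have := hbound j; have := h0c j
    simp only [Pi.add_apply, Pi.zero_apply] at *; linarith
  have hacu : a + c ≤ u := by
    intro j; have := hbound j; have := h0b j
    simp only [Pi.add_apply, Pi.zero_apply] at *; linarith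
  have habcu : a + b + c ≤ u := by
    intro j; have := hbound j
    simp only [Pi.add_apply] at *; linarith
  have hcu : c ≤ u := by
    intro j; have := hbound j; have := h0a j; have := h0b j
    simp only [Pi.zero_apply] at *; linarith
  have e1 : (a + c) ⊔ (a + b) = a + b + c := by
    funext j
    simp only [Pi.sup_apply, Pi.add_apply, ha, hb, hc, Pi.single_apply]
    rcases eq_or_ne j h₁ with rfl | j1
    · simp [h12, h1i]
    · rcases eq_or_ne j h₂ with rfl | j2
      · simp [hne, h2i, sup_eq_right.mpr hvh2]
      · rcases eq_or_ne j i with rfl | j3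
        · simp [hi1, hi2, sup_eq_left.mpr hvi]
        · simp [j1, j2, j3]
  have e2 : (a + c) ⊓ (a + b) = a := by
    funext j
    simp only [Pi.inf_apply, Pi.add_apply, ha, hb, hc, Pi.single_apply]
    rcases eq_or_ne j h₁ with rfl | j1
    · simp [h12, h1i]
    · rcases eq_or_ne j h₂ with rfl | j2
      · simp [hne, h2i, inf_eq_left.mpr hvh2]
      · rcases eq_or_ne j i with rfl | j3
        · simp [hi1, hi2, inf_eq_right.mpr hvi]
        · simp [j1, j2, j3]
  have e3 : (a + b) ⊔ c = a + b + c := by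
    funext j
    simp only [Pi.sup_apply, Pi.add_apply, ha, hb, hc, Pi.single_apply]
    rcases eq_or_ne j h₁ with rfl | j1
    · simp [h12, h1i, sup_eq_left.mpr hvh1]
    · rcases eq_or_ne j h₂ with rfl | j2
      · simp [hne, h2i, sup_eq_left.mpr hvh2]
      · rcases eq_or_ne j i with rfl | j3
        · simp [hi1, hi2, sup_eq_right.mpr hvi]
        · simp [j1, j2, j3]
  have e4 : (a + b) ⊓ c = 0 := by
    funext j
    simp only [Pi.inf_apply, Pi.add_apply, Pi.zero_apply, ha, hb, hc, Pi.single_apply]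
    rcases eq_or_ne j h₁ with rfl | j1
    · simp [h12, h1i, inf_eq_right.mpr hvh1]
    · rcases eq_or_ne j h₂ with rfl | j2
      · simp [hne, h2i, inf_eq_right.mpr hvh2]
      · rcases eq_or_ne j i with rfl | j3
        · simp [hi1, hi2, inf_eq_left.mpr hvi]
        · simp [j1, j2, j3]
  have s1 := hsub (a + c) (a + b) (add_nonneg h0a h0c) hacu (add_nonneg h0a h0b) habu
  rw [e1, e2] at s1
  have s2 := hsub (a + b) c (add_nonneg h0a h0b) habu h0c hcu
  rw [e3, e4] at s2
  have hac : F (a + c) ≤ F (a + b) := hmax2 i hi1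
  have hca : F c ≤ F a := hmax1 i
  have h0F : 0 ≤ F 0 := hnn 0 le_rfl hu
  linarith
end

section
/- Let ε > 0 and let (w_i)_{i≥0} be a sequence of real numbers with w_0 ≥ ε and w_{i+1} = w_i + √(ε·w_i) for every i ≥ 0. Then for every non-negative integer i, w_i ≥ ε·(i² + 16)/16. -/
/-- quadratic lower bound on the growth of the grid sequence
once it has reached ε. -/
theorem stmt_14 (ε : ℝ) (hε : 0 < ε) (w : ℕ → ℝ) (hw0 : ε ≤ w 0)
    (hws : ∀ i : ℕ, w (i + 1) = w i + Real.sqrt (ε * w i)) :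
    ∀ i : ℕ, ε * ((i : ℝ) ^ 2 + 16) / 16 ≤ w i := by
  intro i
  induction i with
  | zero => simpa using hw0
  | succ n ih =>
    rw [hws n]
    have hwn : 0 < w n := lt_of_lt_of_le (by positivity) ih
    have hsq : Real.sqrt (ε * (ε * ((n : ℝ) ^ 2 + 16) / 16)) ≤ Real.sqrt (ε * w n) :=
      Real.sqrt_le_sqrt (by nlinarith)
    have hval : Real.sqrt (ε * (ε * ((n : ℝ) ^ 2 + 16) / 16))
        = ε * Real.sqrt ((n : ℝ) ^ 2 + 16) / 4 := by
      rw [show ε * (ε * ((n : ℝ) ^ 2 + 16) / 16) = (ε / 4) ^ 2 * ((n : ℝ) ^ 2 + 16) by ring,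
        Real.sqrt_mul (by positivity), Real.sqrt_sq (by positivity)]
      ring
    have hroot : (2 * (n : ℝ) + 1) / 4 ≤ Real.sqrt ((n : ℝ) ^ 2 + 16) := by
      rw [show ((n:ℝ)^2 + 16) = ((2 * (n:ℝ) + 1) / 4)^2 + (12*(n:ℝ)^2 - 4*n + 255)/16 by ring]
      refine le_trans ?_ (Real.sqrt_le_sqrt (by nlinarith [sq_nonneg ((n:ℝ)-1)] :
        ((2 * (n:ℝ) + 1) / 4)^2 ≤ ((2 * (n:ℝ) + 1) / 4)^2 + (12*(n:ℝ)^2 - 4*n + 255)/16))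
      rw [Real.sqrt_sq (by positivity)]
    have : ε * ((2 * (n : ℝ) + 1) / 4) / 4 ≤ ε * Real.sqrt ((n : ℝ) ^ 2 + 16) / 4 := by
      have := mul_le_mul_of_nonneg_left hroot hε.le
      linarith
    push_cast
    nlinarith [hsq, hval.symm.le, hval.le]
end

section
/- Let ε > 0, a > 0, and B > 0. Define the sequence z_0 = a and z_{i+1} = z_i + √(ε·z_i). Then for i' = max(0, ⌈log₂(ε/a)⌉) + ⌈4·√(B/ε)⌉, one has z_{i'} ≥ B. -/
/-- the grid sequence reaches B after
max(0, ⌈log₂(ε/a)⌉) + ⌈4·√(B/ε)⌉ steps. -/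
theorem stmt_15 (ε a B : ℝ) (hε : 0 < ε) (ha : 0 < a) (hB : 0 < B)
    (z : ℕ → ℝ) (hz0 : z 0 = a)
    (hzs : ∀ i : ℕ, z (i + 1) = z i + Real.sqrt (ε * z i)) :
    B ≤ z (⌈Real.logb 2 (ε / a)⌉.toNat + ⌈4 * Real.sqrt (B / ε)⌉₊) := by
  set k₁ := (⌈Real.logb 2 (ε / a)⌉).toNat with hk₁
  set k₂ := ⌈4 * Real.sqrt (B / ε)⌉₊ with hk₂
  have hpos : ∀ i, 0 < z i := by
    intro i; induction i with
    | zero => rw [hz0]; exact ha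
    | succ n ih =>
      rw [hzs]
      have := Real.sqrt_nonneg (ε * z n)
      linarith
  have hmono : Monotone z := by
    apply monotone_nat_of_le_succ
    intro n
    have := Real.sqrt_nonneg (ε * z n)
    rw [hzs]; linarith
  -- Phase 1: doubling
  have phase1 : ∀ i, min (a * 2 ^ i) ε ≤ z i := by
    intro i; induction i with
    | zero => rw [hz0]; simp
    | succ n ih =>
      rcases le_or_gt ε (z n) with h | h
      · calc min (a * 2 ^ (n+1)) ε ≤ ε := min_le_right _ _
          _ ≤ z n := h
          _ ≤ z (n+1) := hmono (Nat.le_succ n)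
      · have hzn := hpos n
        have hs : z n ≤ Real.sqrt (ε * z n) := by
          nlinarith [Real.sq_sqrt (mul_nonneg hε.le hzn.le),
            Real.sqrt_nonneg (ε * z n)]
        have hmin : min (a * 2 ^ (n+1)) ε ≤ 2 * min (a * 2 ^ n) ε := by
          rcases le_total (a * 2 ^ n) ε with hc | hc
          · rw [min_eq_left hc]
            calc min (a * 2 ^ (n+1)) ε ≤ a * 2 ^ (n+1) := min_le_left _ _
              _ = 2 * (a * 2 ^ n) := by ring
          · rw [min_eq_right hc]
            have := min_le_right (a * 2 ^ (n+1)) ε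
            linarith
        rw [hzs]; linarith
  -- after k₁ steps, z ≥ ε
  have h2k : ε / a ≤ 2 ^ k₁ := by
    rcases le_total (ε / a) 1 with h | h
    · exact h.trans (one_le_pow₀ (by norm_num))
    · have hlog : Real.logb 2 (ε / a) ≤ (k₁ : ℝ) := by
        have h1 := Int.le_ceil (Real.logb 2 (ε / a))
        have h2 : (⌈Real.logb 2 (ε / a)⌉ : ℝ) ≤ ((k₁ : ℤ) : ℝ) := by
          exact_mod_cast Int.self_le_toNat _
        push_cast at h2 ⊢
        linarith
      calc ε / a = (2 : ℝ) ^ Real.logb 2 (ε / a) :=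
            (Real.rpow_logb two_pos (by norm_num) (by positivity)).symm
        _ ≤ (2 : ℝ) ^ (k₁ : ℝ) :=
            Real.rpow_le_rpow_of_exponent_le (by norm_num) hlog
        _ = 2 ^ k₁ := Real.rpow_natCast 2 k₁
  have hεk : ε ≤ z k₁ := by
    have h1 : ε ≤ a * 2 ^ k₁ := by
      rw [div_le_iff₀ ha] at h2k; linarith [h2k]
    have h2 := phase1 k₁
    rw [min_eq_right h1] at h2
    exact h2
  have hεm : ∀ j, ε ≤ z (k₁ + j) := fun j => hεk.trans (hmono (Nat.le_add_right _ _))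
  -- Phase 2: sqrt grows linearly
  have phase2 : ∀ j : ℕ, Real.sqrt ε + j * (Real.sqrt ε / 4) ≤ Real.sqrt (z (k₁ + j)) := by
    intro j; induction j with
    | zero => simpa using Real.sqrt_le_sqrt (hεm 0)
    | succ n ih =>
      have hz' := hεm n
      have hzn := hpos (k₁ + n)
      have hes : Real.sqrt ε ≤ Real.sqrt (z (k₁ + n)) := Real.sqrt_le_sqrt hz'
      have he0 : 0 ≤ Real.sqrt ε := Real.sqrt_nonneg ε
      have hs0 : 0 ≤ Real.sqrt (z (k₁ + n)) := Real.sqrt_nonneg _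
      have hsqz : Real.sqrt (z (k₁ + n)) ^ 2 = z (k₁ + n) := Real.sq_sqrt hzn.le
      have hsqe : Real.sqrt ε ^ 2 = ε := Real.sq_sqrt hε.le
      have hmul : Real.sqrt (ε * z (k₁ + n)) = Real.sqrt ε * Real.sqrt (z (k₁ + n)) :=
        Real.sqrt_mul hε.le _
      have hstep : Real.sqrt (z (k₁ + n)) + Real.sqrt ε / 4 ≤ Real.sqrt (z (k₁ + n + 1)) := by
        rw [hzs, hmul, Real.le_sqrt (by positivity) (by nlinarith)]
        nlinarith
      have : z (k₁ + (n + 1)) = z (k₁ + n + 1) := by ring_nf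
      rw [this]
      push_cast
      linarith
  -- conclude
  have hc : 4 * Real.sqrt (B / ε) ≤ (k₂ : ℝ) := Nat.le_ceil _
  have hBε : Real.sqrt (B / ε) * Real.sqrt ε = Real.sqrt B := by
    rw [← Real.sqrt_mul (by positivity), div_mul_cancel₀ _ hε.ne']
  have hfin := phase2 k₂
  have hsB : Real.sqrt B ≤ Real.sqrt (z (k₁ + k₂)) := by
    have he0 : 0 ≤ Real.sqrt ε := Real.sqrt_nonneg ε
    have : Real.sqrt B ≤ (k₂ : ℝ) * (Real.sqrt ε / 4) := by
      rw [← hBε]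
      nlinarith
    linarith
  nlinarith [Real.sq_sqrt hB.le, Real.sq_sqrt (hpos (k₁ + k₂)).le,
    Real.sqrt_nonneg B, Real.sqrt_nonneg (z (k₁ + k₂))]
end
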